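/- Let M be a finite length semisimple module over a commutative unital ring R, and let S_M be the set of maximal ideals m of R with dim_{R/m}(M/mM) ≥ 2. If S_M is empty, then M is cyclic; otherwise the covering number of M equals min over m in S_M of |R/m| + 1. -/

import Mathlib

universe u

open Cardinal

/-- The covering number of a module: the least cardinal number of proper submodules whose
union is the whole module. -/
noncomputable def coveringNumber (R M : Type u) [Ring R] [AddCommGroup M] [Module R M] :
    Cardinal.{u} :=
  sInf {c : Cardinal.{u} | ∃ S : Set (Submodule R M),
    (∀ N ∈ S, N ≠ ⊤) ∧ (⋃ N ∈ S, (N : Set M)) = Set.univ ∧ #S = c}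

/-- The set of maximal ideals `m` of `R` with `dim_{R/m} (M/mM) ≥ 2`. -/
def SMax (R M : Type u) [CommRing R] [AddCommGroup M] [Module R M] :
    Set (MaximalSpectrum R) :=
  {m | 2 ≤ Module.rank (R ⧸ m.asIdeal) (M ⧸ (m.asIdeal • ⊤ : Submodule R M))}

open Submodule

section Aux

theorem exists_lines_cover {K V : Type u} [Field K] [AddCommGroup V] [Module K V]
    (h2 : 2 ≤ Module.rank K V) :
    ∃ L : Option K → Set V,
      (∀ a, L a ≠ Set.univ) ∧ (∀ v, ∃ a, v ∈ L a) ∧ Function.Injective L ∧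
      (∀ a, (0 : V) ∈ L a) ∧ (∀ a, ∀ x y, x ∈ L a → y ∈ L a → x + y ∈ L a) ∧
      (∀ a, ∀ (c : K), ∀ x, x ∈ L a → c • x ∈ L a) := by
  classical
  let b := Module.Basis.ofVectorSpace K V
  have hrank : #(Module.Basis.ofVectorSpaceIndex K V) = Module.rank K V := b.mk_eq_rank''
  have h2' : 2 ≤ #(Module.Basis.ofVectorSpaceIndex K V) := by rw [hrank]; exact h2
  obtain ⟨i, j, hij⟩ := Cardinal.two_le_iff.mp h2'
  let φ : V →ₗ[K] K × K := (b.coord i).prod (b.coord j)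
  have hcoord : ∀ (c d : K), φ (c • b i + d • b j) = (c, d) := by
    intro c d
    have hii : b.coord i (b i) = 1 := by simp [Module.Basis.coord_apply, Module.Basis.repr_self]
    have hjj : b.coord j (b j) = 1 := by simp [Module.Basis.coord_apply, Module.Basis.repr_self]
    have hijc : b.coord i (b j) = 0 := by
      simp [Module.Basis.coord_apply, Module.Basis.repr_self, Finsupp.single_apply, hij,
        (Ne.symm hij : j ≠ i)]
    have hjic : b.coord j (b i) = 0 := by
      simp [Module.Basis.coord_apply, Module.Basis.repr_self, Finsupp.single_apply, hij,
        (Ne.symm hij : j ≠ i)]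
    simp [φ, LinearMap.prod_apply, map_add, map_smul, hii, hjj, hijc, hjic]
  have hφ : Function.Surjective φ := by
    rintro ⟨c, d⟩
    exact ⟨c • b i + d • b j, hcoord c d⟩
  let line : Option K → Submodule K (K × K) := fun a =>
    Option.rec (Submodule.span K {((0 : K), (1 : K))})
      (fun a => Submodule.span K {((1 : K), a)}) a
  have hline_ne : ∀ a, line a ≠ ⊤ := by
    rintro (_ | a) htop
    · have : ((1 : K), (0 : K)) ∈ Submodule.span K {((0 : K), (1 : K))} := by
        rw [show Submodule.span K {((0 : K), (1 : K))} = line none from rfl, htop]; trivial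
      obtain ⟨c, hc⟩ := Submodule.mem_span_singleton.mp this
      rw [Prod.smul_def] at hc
      simpa using congrArg Prod.fst hc
    · have : ((0 : K), (1 : K)) ∈ Submodule.span K {((1 : K), a)} := by
        rw [show Submodule.span K {((1 : K), a)} = line (some a) from rfl, htop]; trivial
      obtain ⟨c, hc⟩ := Submodule.mem_span_singleton.mp this
      rw [Prod.smul_def] at hc
      have h1 := congrArg Prod.fst hc
      simp at h1
      rw [h1] at hc
      simpa using congrArg Prod.snd hc
  have hline_cov : ∀ w : K × K, ∃ a, w ∈ line a := by
    rintro ⟨c, d⟩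
    by_cases hc : c = 0
    · refine ⟨none, Submodule.mem_span_singleton.mpr ⟨d, ?_⟩⟩
      rw [Prod.smul_def]; simp [hc]
    · refine ⟨some (d * c⁻¹), Submodule.mem_span_singleton.mpr ⟨c, ?_⟩⟩
      rw [Prod.smul_def]
      simp only [smul_eq_mul, mul_one, Prod.mk.injEq, true_and]
      field_simp
  have hline_inj : Function.Injective line := by
    intro a b' hEq
    rcases a with _ | a <;> rcases b' with _ | b'
    · rfl
    · exfalso
      have : ((0 : K), (1 : K)) ∈ Submodule.span K {((1 : K), b')} := by
        rw [show Submodule.span K {((1:K), b')} = line (some b') from rfl, ← hEq]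
        exact Submodule.mem_span_singleton_self _
      obtain ⟨c, hc⟩ := Submodule.mem_span_singleton.mp this
      rw [Prod.smul_def] at hc
      have h1 := congrArg Prod.fst hc
      simp at h1
      rw [h1] at hc
      simpa using congrArg Prod.snd hc
    · exfalso
      have : ((0 : K), (1 : K)) ∈ Submodule.span K {((1 : K), a)} := by
        rw [show Submodule.span K {((1:K), a)} = line (some a) from rfl, hEq]
        exact Submodule.mem_span_singleton_self _
      obtain ⟨c, hc⟩ := Submodule.mem_span_singleton.mp this
      rw [Prod.smul_def] at hc
      have h1 := congrArg Prod.fst hc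
      simp at h1
      rw [h1] at hc
      simpa using congrArg Prod.snd hc
    · have : ((1 : K), a) ∈ Submodule.span K {((1 : K), b')} := by
        rw [show Submodule.span K {((1:K), b')} = line (some b') from rfl, ← hEq]
        exact Submodule.mem_span_singleton_self _
      obtain ⟨c, hc⟩ := Submodule.mem_span_singleton.mp this
      rw [Prod.smul_def] at hc
      have h1 := congrArg Prod.fst hc
      simp at h1
      rw [h1] at hc
      have h2 := congrArg Prod.snd hc
      simp [h1] at h2
      rw [h2]
  refine ⟨fun a => ⇑φ ⁻¹' (SetLike.coe (line a)), ?_, ?_, ?_, ?_, ?_, ?_⟩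
  · intro a htop
    obtain ⟨w, hw⟩ : ∃ w : K × K, w ∉ line a := by
      by_contra hall
      push_neg at hall
      exact hline_ne a (Submodule.eq_top_iff'.mpr hall)
    obtain ⟨v, rfl⟩ := hφ w
    have : v ∈ ⇑φ ⁻¹' (SetLike.coe (line a)) := by
      simp only [] at htop
      rw [htop]; trivial
    exact hw this
  · intro v
    obtain ⟨a, ha⟩ := hline_cov (φ v)
    exact ⟨a, ha⟩
  · intro a b' hEq
    apply hline_inj
    apply SetLike.ext'
    simp only [] at hEq
    rw [← Set.image_preimage_eq (SetLike.coe (line a)) hφ,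
      ← Set.image_preimage_eq (SetLike.coe (line b')) hφ, hEq]
  · intro a; simp only [Set.mem_preimage, map_zero]; exact (line a).zero_mem
  · intro a x y hx hy; simp only [Set.mem_preimage, map_add]; exact (line a).add_mem hx hy
  · intro a c x hx; simp only [Set.mem_preimage, map_smul]; exact (line a).smul_mem c hx


variable {R M : Type u} [CommRing R] [AddCommGroup M] [Module R M]

abbrev blk (R : Type u) {M : Type u} [CommRing R] [AddCommGroup M] [Module R M]
    (m : MaximalSpectrum R) : Submodule R M :=
  Submodule.torsionBySet R M (m.asIdeal : Set R)

theorem rank_blk_le [IsSemisimpleModule R M] (m : MaximalSpectrum R) :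
    Module.rank (R ⧸ m.asIdeal) ↥(blk R (M := M) m) ≤
      Module.rank (R ⧸ m.asIdeal) (M ⧸ (m.asIdeal • ⊤ : Submodule R M)) := by
  obtain ⟨C, hC⟩ := exists_isCompl (blk R (M := M) m)
  have hsm : (m.asIdeal • ⊤ : Submodule R M) ≤ C := by
    have h1 : (m.asIdeal • ⊤ : Submodule R M) = m.asIdeal • (blk R (M := M) m ⊔ C) := by
      rw [hC.sup_eq_top]
    rw [h1, Submodule.smul_sup]
    refine sup_le (le_trans ?_ bot_le) Submodule.smul_le_right
    rw [le_bot_iff, eq_bot_iff]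
    refine Submodule.smul_le.mpr fun r hr n hn => ?_
    have := (Submodule.mem_torsionBySet_iff _ _).mp hn ⟨r, hr⟩
    simpa using this
  let f1 : (M ⧸ (m.asIdeal • ⊤ : Submodule R M)) →ₗ[R] M ⧸ C :=
    Submodule.mapQ _ _ LinearMap.id hsm
  let e2 : (M ⧸ C) ≃ₗ[R] ↥(blk R (M := M) m) :=
    Submodule.quotientEquivOfIsCompl C (blk R (M := M) m) hC.symm
  let g : (M ⧸ (m.asIdeal • ⊤ : Submodule R M)) →ₗ[R] ↥(blk R (M := M) m) :=
    e2.toLinearMap ∘ₗ f1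
  have hg : Function.Surjective g := by
    apply Function.Surjective.comp e2.surjective
    intro y
    obtain ⟨x, rfl⟩ := C.mkQ_surjective y
    exact ⟨Submodule.Quotient.mk x, rfl⟩
  let g' : (M ⧸ (m.asIdeal • ⊤ : Submodule R M)) →ₗ[R ⧸ m.asIdeal] ↥(blk R (M := M) m) :=
    { toFun := g
      map_add' := g.map_add
      map_smul' := by
        intro c x
        obtain ⟨r, rfl⟩ := Ideal.Quotient.mk_surjective c
        obtain ⟨y, rfl⟩ := Submodule.Quotient.mk_surjective _ x
        simp only [RingHom.id_apply]
        show g (Submodule.Quotient.mk (r • y)) = Ideal.Quotient.mk m.asIdeal r •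
          g (Submodule.Quotient.mk y)
        have h1 : (Submodule.Quotient.mk (p := (m.asIdeal • ⊤ : Submodule R M)) (r • y)) =
            r • Submodule.Quotient.mk (p := (m.asIdeal • ⊤ : Submodule R M)) y := rfl
        rw [h1, g.map_smul]
        rfl }
  exact LinearMap.rank_le_of_surjective g' hg



theorem two_le_of_one_lt {c : Cardinal} (h : 1 < c) : 2 ≤ c := by
  have h2 := Order.succ_le_of_lt h
  have h3 : ((Nat.succ 1 : ℕ) : Cardinal) = Order.succ ((1 : ℕ) : Cardinal) :=
    Cardinal.nat_succ 1
  rw [Nat.cast_one] at h3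
  rw [← h3] at h2
  exact_mod_cast h2

theorem two_le_rank_of_cover {K V : Type u} [Field K] [AddCommGroup V] [Module K V]
    (S : Set (Submodule K V)) (hS : ∀ W ∈ S, W ≠ ⊤)
    (hcov : ∀ v : V, ∃ W ∈ S, v ∈ W) : 2 ≤ Module.rank K V := by
  have hnt : Nontrivial V := by
    by_contra h
    rw [not_nontrivial_iff_subsingleton] at h
    obtain ⟨W, hWS, -⟩ := hcov 0
    exact hS W hWS (Subsingleton.elim _ _)
  apply two_le_of_one_lt
  by_contra h
  push_neg at h
  obtain ⟨v₀, hv₀⟩ := rank_le_one_iff.mp h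
  obtain ⟨W, hWS, hW⟩ := hcov v₀
  refine hS W hWS (Submodule.eq_top_iff'.mpr fun v => ?_)
  obtain ⟨c, rfl⟩ := hv₀ v
  exact W.smul_mem c hW

theorem iSup_blk [IsSemisimpleModule R M] :
    ⨆ m : MaximalSpectrum R, blk R (M := M) m = ⊤ := by
  apply le_antisymm le_top
  rw [← IsSemisimpleModule.sSup_simples_eq_top R M]
  apply sSup_le
  rintro p (hp : IsSimpleModule R p)
  haveI := hp
  have hmax := IsSimpleModule.annihilator_isMaximal (R := R) (M := ↥p)
  refine le_trans ?_ (le_iSup _ ⟨Module.annihilator R ↥p, hmax⟩)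
  intro x hx
  rw [Submodule.mem_torsionBySet_iff]
  rintro ⟨r, hr⟩
  have := Module.mem_annihilator.mp hr ⟨x, hx⟩
  simpa [Subtype.ext_iff] using this

theorem exists_support [IsSemisimpleModule R M] [IsNoetherian R M] :
    ∃ t : Finset (MaximalSpectrum R), ⨆ m ∈ t, blk R (M := M) m = ⊤ := by
  have hfg : (⊤ : Submodule R M).FG := IsNoetherian.noetherian ⊤
  have hcomp := (Submodule.fg_iff_compact _).mp hfg
  obtain ⟨t, ht⟩ := CompleteLattice.IsCompactElement.exists_finset_of_le_iSup (Submodule R M) hcomp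
    (fun m : MaximalSpectrum R => blk R (M := M) m) (by rw [iSup_blk])
  exact ⟨t, le_antisymm le_top ht⟩

/-- Key grouping lemma: the blocks of an element of `N` are in `N`. -/
theorem grouping {t : Finset (MaximalSpectrum R)} {x : MaximalSpectrum R → M}
    (hx : ∀ m ∈ t, x m ∈ blk R (M := M) m) {N : Submodule R M}
    (hN : (∑ m ∈ t, x m) ∈ N) : ∀ j ∈ t, x j ∈ N := by
  classical
  intro j hj
  have hne : ¬ ((t.erase j).inf (fun m => m.asIdeal) ≤ j.asIdeal) := by
    intro hle
    obtain ⟨i, hi, hile⟩ := (Ideal.IsPrime.inf_le' j.isMaximal.isPrime).mp hle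
    have : i.asIdeal = j.asIdeal :=
      i.isMaximal.eq_of_le j.isMaximal.ne_top hile
    exact (Finset.mem_erase.mp hi).1 (MaximalSpectrum.ext this)
  have hsup : j.asIdeal ⊔ (t.erase j).inf (fun m => m.asIdeal) = ⊤ := by
    by_contra hne2
    rcases (le_sup_left : j.asIdeal ≤ j.asIdeal ⊔ (t.erase j).inf (fun m => m.asIdeal)).lt_or_eq
      with h | h
    · exact hne2 (j.isMaximal.1.2 _ h)
    · refine hne ?_
      have h2 : (t.erase j).inf (fun m => m.asIdeal) ≤
          j.asIdeal ⊔ (t.erase j).inf (fun m => m.asIdeal) := le_sup_right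
      rwa [← h] at h2
  have h1 : (1 : R) ∈ j.asIdeal ⊔ (t.erase j).inf (fun m => m.asIdeal) := by
    rw [hsup]; exact Submodule.mem_top
  obtain ⟨a, ha, b, hb, hab⟩ := Submodule.mem_sup.mp h1
  have hbx : x j = b • (∑ m ∈ t, x m) := by
    rw [Finset.smul_sum, Finset.sum_eq_single_of_mem j hj]
    · have hax : a • x j = 0 := by
        have := (Submodule.mem_torsionBySet_iff _ _).mp (hx j hj) ⟨a, ha⟩
        simpa using this
      have : b = 1 - a := by linear_combination hab
      rw [this, sub_smul, one_smul, hax, sub_zero]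
    · intro i hi hij
      have hbi : b ∈ i.asIdeal := by
        exact (Finset.inf_le (f := fun m : MaximalSpectrum R => m.asIdeal)
          (Finset.mem_erase.mpr ⟨hij, hi⟩)) hb
      have := (Submodule.mem_torsionBySet_iff _ _).mp (hx i hi) ⟨b, hbi⟩
      simpa using this
  rw [hbx]
  exact N.smul_mem b hN

theorem vs_cover_lb {K V : Type u} [Field K] [AddCommGroup V] [Module K V]
    [FiniteDimensional K V] (S : Set (Submodule K V)) (hS : ∀ W ∈ S, W ≠ ⊤)
    (hcov : ∀ v : V, ∃ W ∈ S, v ∈ W) : #K + 1 ≤ #S := by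
  generalize hn : Module.finrank K V = n
  induction n using Nat.strong_induction_on generalizing V with
  | _ n ih =>
  have hnt : Nontrivial V := by
    by_contra h
    rw [not_nontrivial_iff_subsingleton] at h
    obtain ⟨W, hWS, -⟩ := hcov 0
    exact hS W hWS (Subsingleton.elim _ _)
  obtain ⟨u, hu⟩ := exists_ne (0 : V)
  by_cases h : ∀ v : V, ∃ W ∈ S, u ∈ W ∧ v ∈ W
  · set p := Submodule.span K {u} with hpdef
    set S' : Set (Submodule K (V ⧸ p)) := (Submodule.map p.mkQ) '' {W ∈ S | u ∈ W} with hS'def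
    have hp : p ≠ ⊥ := by
      simpa [hpdef, Submodule.span_singleton_eq_bot] using hu
    have hlt : Module.finrank K (V ⧸ p) < n := by
      rw [← hn, ← p.finrank_quotient_add_finrank]
      have : 0 < Module.finrank K (↥p) := Module.finrank_pos_iff.mpr (by
        rwa [Submodule.nontrivial_iff_ne_bot])
      omega
    refine le_trans (ih _ hlt S' ?_ ?_ rfl) ?_
    · rintro W' ⟨W, ⟨hWS, hWu⟩, rfl⟩ htop
      refine hS W hWS ?_
      have hpW : p ≤ W := by simpa [hpdef, Submodule.span_le] using hWu
      rw [Submodule.map_mkQ_eq_top] at htop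
      rwa [sup_eq_right.mpr hpW] at htop
    · intro v'
      obtain ⟨v, rfl⟩ := p.mkQ_surjective v'
      obtain ⟨W, hWS, hWu, hWv⟩ := h v
      exact ⟨Submodule.map p.mkQ W, ⟨W, ⟨hWS, hWu⟩, rfl⟩, Submodule.mem_map_of_mem hWv⟩
    · exact le_trans Cardinal.mk_image_le (Cardinal.mk_le_mk_of_subset (fun x hx => hx.1))
  · push_neg at h
    obtain ⟨v, hv⟩ := h
    have pick : ∀ x : V, ∃ W : S, x ∈ (W : Submodule K V) := fun x => by
      obtain ⟨W, hWS, hx⟩ := hcov x; exact ⟨⟨W, hWS⟩, hx⟩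
    choose c hc using pick
    set F : Option K → S := fun o => Option.rec (c v) (fun t => c (u + t • v)) o with hFdef
    have key : ∀ (W : Submodule K V), W ∈ S → u ∈ W → v ∈ W → False := fun W h1 h2 h3 =>
      hv W h1 h2 h3
    have hF : Function.Injective F := by
      intro a b hEq
      rcases a with _ | t <;> rcases b with _ | s
      · rfl
      · exfalso
        have h1 : v ∈ (F none : Submodule K V) := hc v
        have h2 : u + s • v ∈ (F none : Submodule K V) := by
          rw [hEq]; exact hc _
        have huW : u ∈ (F none : Submodule K V) := by
          have := (F none : Submodule K V).sub_mem h2 ((F none : Submodule K V).smul_mem s h1)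
          simpa using this
        exact key _ (F none).2 huW h1
      · exfalso
        have h1 : v ∈ (F (some t) : Submodule K V) := by rw [hEq]; exact hc v
        have h2 : u + t • v ∈ (F (some t) : Submodule K V) := hc _
        have huW : u ∈ (F (some t) : Submodule K V) := by
          have := (F (some t) : Submodule K V).sub_mem h2 ((F (some t) : Submodule K V).smul_mem t h1)
          simpa using this
        exact key _ (F (some t)).2 huW h1
      · by_cases hts : t = s
        · rw [hts]
        · exfalso
          have h1 : u + t • v ∈ (F (some t) : Submodule K V) := hc _
          have h2 : u + s • v ∈ (F (some t) : Submodule K V) := by rw [hEq]; exact hc _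
          have hvW : v ∈ (F (some t) : Submodule K V) := by
            have hsub := (F (some t) : Submodule K V).sub_mem h1 h2
            have h3 : (t - s) • v ∈ (F (some t) : Submodule K V) := by
              convert hsub using 1; rw [sub_smul]; abel
            have := (F (some t) : Submodule K V).smul_mem (t - s)⁻¹ h3
            rwa [inv_smul_smul₀ (sub_ne_zero.mpr hts)] at this
          have huW : u ∈ (F (some t) : Submodule K V) := by
            have := (F (some t) : Submodule K V).sub_mem h1
              ((F (some t) : Submodule K V).smul_mem t hvW)
            simpa using this
          exact key _ (F (some t)).2 huW hvW
    calc #K + 1 = #(Option K) := (Cardinal.mk_option).symm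
    _ ≤ #S := Cardinal.mk_le_of_injective hF

/-- Convert an `R`-submodule of the `m`-torsion block into an `R ⧸ m`-submodule. -/
def toKsub (m : MaximalSpectrum R) (N : Submodule R ↥(blk R (M := M) m)) :
    Submodule (R ⧸ m.asIdeal) ↥(blk R (M := M) m) where
  carrier := N
  add_mem' := N.add_mem
  zero_mem' := N.zero_mem
  smul_mem' := by
    intro c x hx
    obtain ⟨r, rfl⟩ := Ideal.Quotient.mk_surjective c
    show (Ideal.Quotient.mk m.asIdeal r) • x ∈ N
    have : (Ideal.Quotient.mk m.asIdeal r) • x = r • x := rfl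
    rw [this]
    exact N.smul_mem r hx

theorem mem_toKsub {m : MaximalSpectrum R} {N : Submodule R ↥(blk R (M := M) m)}
    {x : ↥(blk R (M := M) m)} : x ∈ toKsub m N ↔ x ∈ N := Iff.rfl

theorem exists_SMax_le [IsSemisimpleModule R M] (hfl : IsFiniteLength R M)
    (S : Set (Submodule R M)) (hprop : ∀ N ∈ S, N ≠ ⊤)
    (hcov : ∀ v : M, ∃ N ∈ S, v ∈ N) :
    ∃ m : MaximalSpectrum R,
      2 ≤ Module.rank (R ⧸ m.asIdeal) (M ⧸ (m.asIdeal • ⊤ : Submodule R M)) ∧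
      #(R ⧸ m.asIdeal) + 1 ≤ #S := by
  classical
  haveI : IsNoetherian R M := ((isFiniteLength_iff_isNoetherian_isArtinian).mp hfl).1
  obtain ⟨t, ht⟩ := exists_support (R := R) (M := M)
  -- find a block covered by proper pieces
  have claim : ∃ j ∈ t, ∀ y ∈ blk R (M := M) j, ∃ N ∈ S, y ∈ N ∧ ¬ (blk R (M := M) j ≤ N) := by
    by_contra hcl
    push_neg at hcl
    choose y hy1 hy2 using hcl
    set x : MaximalSpectrum R → M := fun j => if h : j ∈ t then y j h else 0 with hxdef
    have hxmem : ∀ j ∈ t, x j ∈ blk R (M := M) j := by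
      intro j hj; rw [hxdef]; simp only [dif_pos hj]; exact hy1 j hj
    obtain ⟨N, hNS, hN⟩ := hcov (∑ j ∈ t, x j)
    have hall := grouping hxmem hN
    refine hprop N hNS (top_unique ?_)
    rw [← ht]
    refine iSup₂_le fun j hj => ?_
    refine hy2 j hj N hNS ?_
    have h3 := hall j hj
    rw [hxdef] at h3
    simpa only [dif_pos hj] using h3
  obtain ⟨j, hjt, hj⟩ := claim
  haveI := j.isMaximal
  -- the induced cover of the block
  haveI : Module.Finite R ↥(blk R (M := M) j) := by
    have : (blk R (M := M) j).FG := IsNoetherian.noetherian _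
    exact (Module.Finite.iff_fg).mpr this
  haveI : Module.Finite (R ⧸ j.asIdeal) ↥(blk R (M := M) j) :=
    Module.Finite.of_restrictScalars_finite R (R ⧸ j.asIdeal) _
  set SS : Set (Submodule R M) := {N ∈ S | ¬ (blk R (M := M) j ≤ N)} with hSSdef
  set G : Submodule R M → Submodule (R ⧸ j.asIdeal) ↥(blk R (M := M) j) :=
    fun N => toKsub j (Submodule.comap (blk R (M := M) j).subtype N) with hGdef
  have hS'prop : ∀ W ∈ G '' SS, W ≠ ⊤ := by
    rintro W ⟨N, hNSS, rfl⟩ htop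
    refine hNSS.2 fun z hz => ?_
    have hmem : (⟨z, hz⟩ : ↥(blk R (M := M) j)) ∈ G N := by rw [htop]; trivial
    exact hmem
  have hS'cov : ∀ v : ↥(blk R (M := M) j), ∃ W ∈ G '' SS, v ∈ W := by
    intro v
    obtain ⟨N, hNS, hvN, hnle⟩ := hj ↑v v.2
    exact ⟨G N, ⟨N, ⟨hNS, hnle⟩, rfl⟩, hvN⟩
  have hrank2 : 2 ≤ Module.rank (R ⧸ j.asIdeal) ↥(blk R (M := M) j) := by
    exact @two_le_rank_of_cover (R ⧸ j.asIdeal) ↥(blk R (M := M) j) (Ideal.Quotient.field _) _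
      (inferInstance : Module (R ⧸ j.asIdeal) ↥(blk R (M := M) j)) _ hS'prop hS'cov
  refine ⟨j, le_trans hrank2 (rank_blk_le j), ?_⟩
  have hvs : #(R ⧸ j.asIdeal) + 1 ≤ #(G '' SS) :=
    @vs_cover_lb (R ⧸ j.asIdeal) ↥(blk R (M := M) j) (Ideal.Quotient.field _) _
      (inferInstance : Module (R ⧸ j.asIdeal) ↥(blk R (M := M) j))
      (inferInstance : Module.Finite (R ⧸ j.asIdeal) ↥(blk R (M := M) j)) _ hS'prop hS'cov
  calc #(R ⧸ j.asIdeal) + 1 ≤ #(G '' SS) := hvs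
  _ ≤ #SS := Cardinal.mk_image_le
  _ ≤ #S := Cardinal.mk_le_mk_of_subset fun N hN => hN.1


theorem exists_cover_of_SMax (m : MaximalSpectrum R)
    (hm : 2 ≤ Module.rank (R ⧸ m.asIdeal) (M ⧸ (m.asIdeal • ⊤ : Submodule R M))) :
    ∃ S : Set (Submodule R M), (∀ N ∈ S, N ≠ ⊤) ∧ (⋃ N ∈ S, (N : Set M)) = Set.univ ∧
      #S = #(R ⧸ m.asIdeal) + 1 := by
  haveI := m.isMaximal
  obtain ⟨L, hne, hcov, hinj, h0, hadd, hsmul⟩ :=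
    @exists_lines_cover (R ⧸ m.asIdeal) (M ⧸ (m.asIdeal • ⊤ : Submodule R M))
      (Ideal.Quotient.field _) _
      (inferInstance : Module (R ⧸ m.asIdeal) (M ⧸ (m.asIdeal • ⊤ : Submodule R M))) hm
  set π := (m.asIdeal • ⊤ : Submodule R M).mkQ with hπdef
  have hπ : Function.Surjective π := Submodule.mkQ_surjective _
  set N : Option (R ⧸ m.asIdeal) → Submodule R M := fun a =>
    { carrier := ⇑π ⁻¹' (L a)
      add_mem' := fun hx hy => by
        simp only [Set.mem_preimage, map_add] at *
        exact hadd a _ _ hx hy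
      zero_mem' := by
        simp only [Set.mem_preimage, map_zero]
        exact h0 a
      smul_mem' := by
        intro r x hx
        simp only [Set.mem_preimage, map_smul] at *
        have : r • π x = (Ideal.Quotient.mk m.asIdeal r) • π x := rfl
        rw [this]
        exact hsmul a _ _ hx } with hNdef
  have hNinj : Function.Injective N := by
    intro a b hEq
    apply hinj
    have hcar : ⇑π ⁻¹' (L a) = ⇑π ⁻¹' (L b) := congrArg (fun W : Submodule R M => W.carrier) hEq
    rw [← Set.image_preimage_eq (L a) hπ, ← Set.image_preimage_eq (L b) hπ, hcar]
  refine ⟨Set.range N, ?_, ?_, ?_⟩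
  · rintro W ⟨a, rfl⟩ htop
    refine hne a ?_
    rw [Set.eq_univ_iff_forall]
    intro v
    obtain ⟨x, rfl⟩ := hπ v
    have : x ∈ N a := by rw [htop]; trivial
    exact this
  · rw [Set.eq_univ_iff_forall]
    intro x
    obtain ⟨a, ha⟩ := hcov (π x)
    exact Set.mem_biUnion ⟨a, rfl⟩ ha
  · rw [Cardinal.mk_range_eq N hNinj, Cardinal.mk_option]


theorem cyclic_of_rank_le_one {K V : Type u} [Field K] [AddCommGroup V] [Module K V]
    (h : ¬ 2 ≤ Module.rank K V) : ∃ v₀ : V, ∀ v, ∃ c : K, c • v₀ = v := by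
  have h1 : Module.rank K V ≤ 1 := by
    by_contra h1
    exact h (two_le_of_one_lt (not_le.mp h1))
  exact rank_le_one_iff.mp h1


theorem cyclic_of_no_two [IsSemisimpleModule R M] (hfl : IsFiniteLength R M)
    (hS : ∀ m : MaximalSpectrum R,
      ¬ 2 ≤ Module.rank (R ⧸ m.asIdeal) (M ⧸ (m.asIdeal • ⊤ : Submodule R M))) :
    ∃ x : M, Submodule.span R {x} = ⊤ := by
  classical
  haveI : IsNoetherian R M := ((isFiniteLength_iff_isNoetherian_isArtinian).mp hfl).1
  obtain ⟨t, ht⟩ := exists_support (R := R) (M := M)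
  have hgen : ∀ j : MaximalSpectrum R, ∃ v : M, v ∈ blk R (M := M) j ∧
      ∀ y ∈ blk R (M := M) j, ∃ r : R, r • v = y := by
    intro j
    haveI := j.isMaximal
    have h1 : ¬ 2 ≤ Module.rank (R ⧸ j.asIdeal) ↥(blk R (M := M) j) := fun h =>
      hS j (le_trans h (rank_blk_le j))
    obtain ⟨v₀, hv₀⟩ := @cyclic_of_rank_le_one (R ⧸ j.asIdeal) ↥(blk R (M := M) j)
      (Ideal.Quotient.field _) _
      (inferInstance : Module (R ⧸ j.asIdeal) ↥(blk R (M := M) j)) h1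
    refine ⟨↑v₀, v₀.2, fun y hy => ?_⟩
    obtain ⟨c, hc⟩ := hv₀ ⟨y, hy⟩
    obtain ⟨r, rfl⟩ := Ideal.Quotient.mk_surjective c
    refine ⟨r, ?_⟩
    have h2 : (Ideal.Quotient.mk j.asIdeal r) • v₀ = r • v₀ := rfl
    rw [h2] at hc
    simpa using congrArg Subtype.val hc
  choose v hv1 hv2 using hgen
  refine ⟨∑ j ∈ t, v j, ?_⟩
  rw [eq_top_iff, ← ht]
  refine iSup₂_le fun j hj => ?_
  intro y hy
  obtain ⟨r, hr⟩ := hv2 j y hy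
  have hxj : v j ∈ Submodule.span R {∑ j ∈ t, v j} :=
    grouping (fun m _ => hv1 m) (Submodule.mem_span_singleton_self _) j hj
  rw [← hr]
  exact Submodule.smul_mem _ r hxj

end Aux

/-- For a finite length semisimple module `M` over a commutative unital ring `R`: if
`S_M = ∅` then `M` is cyclic; otherwise the covering number of `M` equals
`min_{m ∈ S_M} |R/m| + 1`. -/
theorem stmt11 (R M : Type u) [CommRing R] [AddCommGroup M] [Module R M]
    [IsSemisimpleModule R M] (hfl : IsFiniteLength R M) :
    (SMax R M = ∅ → ∃ x : M, Submodule.span R {x} = ⊤) ∧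
    (SMax R M ≠ ∅ →
      coveringNumber R M = ⨅ m : SMax R M, (#(R ⧸ (m : MaximalSpectrum R).asIdeal) + 1)) := by
  constructor
  · intro hempty
    refine cyclic_of_no_two hfl fun m hm => ?_
    exact Set.eq_empty_iff_forall_notMem.mp hempty m hm
  · intro hne
    obtain ⟨m₀, hm₀⟩ := Set.nonempty_iff_ne_empty.mpr hne
    apply le_antisymm
    · haveI : Nonempty ↥(SMax R M) := ⟨⟨m₀, hm₀⟩⟩
      refine le_ciInf fun m => ?_
      obtain ⟨S, h1, h2, h3⟩ := exists_cover_of_SMax (m : MaximalSpectrum R) m.2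
      exact csInf_le' ⟨S, h1, h2, h3⟩
    · obtain ⟨S₀, h01, h02, h03⟩ := exists_cover_of_SMax m₀ hm₀
      refine le_csInf ⟨_, S₀, h01, h02, h03⟩ ?_
      rintro c ⟨S, hprop, hcov, rfl⟩
      have hcov' : ∀ v : M, ∃ N ∈ S, v ∈ N := by
        intro v
        have hv := Set.eq_univ_iff_forall.mp hcov v
        simpa using hv
      obtain ⟨m, hm2, hle⟩ := exists_SMax_le hfl S hprop hcov'
      exact le_trans (ciInf_le' _ (⟨m, hm2⟩ : SMax R M)) hle
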